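/- Let (Ω, ℱ, 𝒫) be a probability space, (ℱₙ)_{n≥1} a filtration, x an L₂-bounded martingale with x₀ = 0, and let (wₙ)_{n≥1} be a predictable sequence (wₙ is ℱₙ₋₁-measurable) of positive bounded random variables such that (wₙ^{1−2/p})_{n} is nonincreasing for a fixed 0 < p ≤ 2. Then for every k ≥ 1: E[ w_{k+1}^{1−2/p} · x_k² ] ≤ ∑_{n=1}^{k} E[ wₙ^{1−2/p} · (xₙ − xₙ₋₁)² ]. -/

import Mathlib

open MeasureTheory Finset

theorem weighted_estimate
    {Ω : Type*} {m : MeasurableSpace Ω} {μ : Measure Ω} [IsProbabilityMeasure μ]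
    (ℱ : Filtration ℕ m) (x : ℕ → Ω → ℝ) (w : ℕ → Ω → ℝ)
    (hx : Martingale x ℱ μ) (hx2 : ∀ n, MemLp (x n) 2 μ) (hx0 : x 0 = 0)
    (p : ℝ) (hp0 : 0 < p) (hp2 : p ≤ 2)
    (hw_pred : ∀ n : ℕ, 1 ≤ n → StronglyMeasurable[ℱ (n - 1)] (w n))
    (hw_pos : ∀ n ω, 0 < w n ω)
    (hw_bdd : ∀ n : ℕ, ∃ C : ℝ, ∀ ω, w n ω ≤ C)
    (hw_mono : ∀ n ω, w (n + 1) ω ^ (1 - 2 / p) ≤ w n ω ^ (1 - 2 / p))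
    (hint : ∀ n j : ℕ, Integrable (fun ω => w n ω ^ (1 - 2 / p) * (x j ω) ^ 2) μ)
    (hint' : ∀ n : ℕ, Integrable (fun ω => w n ω ^ (1 - 2 / p) * (x n ω - x (n - 1) ω) ^ 2) μ)
    (k : ℕ) (hk : 1 ≤ k) :
    (∫ ω, w (k + 1) ω ^ (1 - 2 / p) * (x k ω) ^ 2 ∂μ) ≤
      ∑ n ∈ Finset.Icc 1 k, ∫ ω, w n ω ^ (1 - 2 / p) * (x n ω - x (n - 1) ω) ^ 2 ∂μ := by
  set α : ℝ := 1 - 2 / p with hα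
  -- strong measurability of w (n+1) ^ α * x n w.r.t. ℱ n
  have hwsm : ∀ n : ℕ, StronglyMeasurable[ℱ n] (fun ω => w (n + 1) ω ^ α) := by
    intro n
    have h := hw_pred (n + 1) (by omega)
    change StronglyMeasurable[ℱ n] (w (n + 1)) at h
    have hm : Measurable[ℱ n] (w (n + 1)) := h.measurable
    exact Measurable.stronglyMeasurable (by measurability)
  have key : ∀ a b : ℝ, |a * b| ≤ (a ^ 2 + b ^ 2) / 2 := fun a b =>
    abs_le.2 ⟨by nlinarith [sq_nonneg (a + b)], by nlinarith [sq_nonneg (a - b)]⟩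
  have hwnn : ∀ n ω, (0:ℝ) ≤ w n ω ^ α := fun n ω => Real.rpow_nonneg (hw_pos n ω).le _
  -- cross term vanishes
  have cross : ∀ n : ℕ,
      ∫ ω, (w (n + 1) ω ^ α * x n ω) * (x (n + 1) ω - x n ω) ∂μ = 0 := by
    intro n
    set g : Ω → ℝ := fun ω => w (n + 1) ω ^ α * x n ω with hg
    set d : Ω → ℝ := fun ω => x (n + 1) ω - x n ω with hd
    have hgsm : StronglyMeasurable[ℱ n] g := (hwsm n).mul (hx.stronglyAdapted n)
    have hdint : Integrable d μ := (hx.integrable (n + 1)).sub (hx.integrable n)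
    have hdd : Integrable (fun ω => w (n + 1) ω ^ α * d ω ^ 2) μ := by
      have := hint' (n + 1)
      simpa [hd, Nat.add_sub_cancel] using this
    have hgd : Integrable (g * d) μ := by
      refine Integrable.mono' (g := fun ω =>
        (w (n + 1) ω ^ α * (x n ω) ^ 2 + w (n + 1) ω ^ α * d ω ^ 2) / 2) ?_ ?_ ?_
      · exact ((hint (n + 1) n).add hdd).div_const 2
      · exact ((hgsm.mono (ℱ.le n)).mul
          (((hx.stronglyMeasurable (n+1)).mono (ℱ.le (n+1))).sub
            ((hx.stronglyMeasurable n).mono (ℱ.le n)))).aestronglyMeasurable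
      · refine Filter.Eventually.of_forall fun ω => ?_
        have hw' := hwnn (n + 1) ω
        have h1 : |x n ω * d ω| ≤ ((x n ω) ^ 2 + d ω ^ 2) / 2 := key _ _
        calc ‖(g * d) ω‖ = w (n + 1) ω ^ α * |x n ω * d ω| := by
              simp [hg, Real.norm_eq_abs, abs_mul, abs_of_nonneg hw', mul_assoc]
          _ ≤ w (n + 1) ω ^ α * (((x n ω) ^ 2 + d ω ^ 2) / 2) :=
              mul_le_mul_of_nonneg_left h1 hw'
          _ = (w (n + 1) ω ^ α * (x n ω) ^ 2 + w (n + 1) ω ^ α * d ω ^ 2) / 2 := by ring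
    have hcond : μ[d | ℱ n] =ᵐ[μ] 0 := by
      have h1 : μ[d | ℱ n] =ᵐ[μ] μ[x (n + 1)|ℱ n] - μ[x n|ℱ n] :=
        condExp_sub (hx.integrable (n + 1)) (hx.integrable n) _
      have h2 := hx.condExp_ae_eq (Nat.le_succ n)
      have h3 := hx.condExp_ae_eq (le_refl n)
      filter_upwards [h1, h2, h3] with ω e1 e2 e3
      simp [e1, Pi.sub_apply, e2, e3]
    have pull := condExp_mul_of_stronglyMeasurable_left hgsm hgd hdint
    have : ∫ ω, (g * d) ω ∂μ = ∫ ω, (μ[g * d | ℱ n]) ω ∂μ :=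
      (integral_condExp (ℱ.le n)).symm
    rw [show (∫ ω, (w (n + 1) ω ^ α * x n ω) * (x (n + 1) ω - x n ω) ∂μ)
        = ∫ ω, (g * d) ω ∂μ from rfl, this]
    have : (μ[g * d | ℱ n]) =ᵐ[μ] 0 := by
      filter_upwards [pull, hcond] with ω e1 e2
      simp [e1, Pi.mul_apply, e2]
    rw [integral_congr_ae this]
    simp
  -- main induction
  have main : ∀ n : ℕ,
      (∫ ω, w (n + 1) ω ^ α * (x n ω) ^ 2 ∂μ) ≤
        ∑ j ∈ Finset.Icc 1 n, ∫ ω, w j ω ^ α * (x j ω - x (j - 1) ω) ^ 2 ∂μ := by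
    intro n
    induction n with
    | zero => simp [hx0]
    | succ n ih =>
      have hdd : Integrable (fun ω => w (n + 1) ω ^ α * (x (n + 1) ω - x n ω) ^ 2) μ := by
        have := hint' (n + 1)
        simpa [Nat.add_sub_cancel] using this
      have hstep1 : (∫ ω, w (n + 2) ω ^ α * (x (n + 1) ω) ^ 2 ∂μ) ≤
          ∫ ω, w (n + 1) ω ^ α * (x (n + 1) ω) ^ 2 ∂μ := by
        refine integral_mono (hint (n + 2) (n + 1)) (hint (n + 1) (n + 1)) fun ω => ?_
        exact mul_le_mul_of_nonneg_right (hw_mono (n + 1) ω) (sq_nonneg _)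
      have hgd : Integrable (fun ω => (w (n + 1) ω ^ α * x n ω) * (x (n + 1) ω - x n ω)) μ := by
        -- reuse integrability proven implicitly: derive again via mono'
        refine Integrable.mono' (g := fun ω =>
          (w (n + 1) ω ^ α * (x n ω) ^ 2 +
            w (n + 1) ω ^ α * (x (n + 1) ω - x n ω) ^ 2) / 2) ?_ ?_ ?_
        · exact ((hint (n + 1) n).add hdd).div_const 2
        · exact ((((hwsm n).mono (ℱ.le n)).mul
            ((hx.stronglyMeasurable n).mono (ℱ.le n))).mul
            (((hx.stronglyMeasurable (n+1)).mono (ℱ.le (n+1))).sub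
              ((hx.stronglyMeasurable n).mono (ℱ.le n)))).aestronglyMeasurable
        · refine Filter.Eventually.of_forall fun ω => ?_
          have hw' := hwnn (n + 1) ω
          set d := x (n + 1) ω - x n ω
          have h1 : |x n ω * d| ≤ ((x n ω) ^ 2 + d ^ 2) / 2 := key _ _
          calc ‖w (n + 1) ω ^ α * x n ω * d‖ = w (n + 1) ω ^ α * |x n ω * d| := by
                simp [Real.norm_eq_abs, abs_mul, abs_of_nonneg hw', mul_assoc]
            _ ≤ w (n + 1) ω ^ α * (((x n ω) ^ 2 + d ^ 2) / 2) :=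
                mul_le_mul_of_nonneg_left h1 hw'
            _ = (w (n + 1) ω ^ α * (x n ω) ^ 2 + w (n + 1) ω ^ α * d ^ 2) / 2 := by ring
      have hsplit : (∫ ω, w (n + 1) ω ^ α * (x (n + 1) ω) ^ 2 ∂μ)
          = (∫ ω, w (n + 1) ω ^ α * (x n ω) ^ 2 ∂μ)
            + (∫ ω, w (n + 1) ω ^ α * (x (n + 1) ω - x n ω) ^ 2 ∂μ)
            + 2 * ∫ ω, (w (n + 1) ω ^ α * x n ω) * (x (n + 1) ω - x n ω) ∂μ := by
        have heq : (fun ω => w (n + 1) ω ^ α * (x (n + 1) ω) ^ 2)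
            = fun ω => (w (n + 1) ω ^ α * (x n ω) ^ 2
              + w (n + 1) ω ^ α * (x (n + 1) ω - x n ω) ^ 2)
              + (2 : ℝ) * ((w (n + 1) ω ^ α * x n ω) * (x (n + 1) ω - x n ω)) := by
          funext ω; ring
        have iAB : Integrable (fun ω => w (n + 1) ω ^ α * (x n ω) ^ 2
            + w (n + 1) ω ^ α * (x (n + 1) ω - x n ω) ^ 2) μ := (hint (n + 1) n).add hdd
        have i2C : Integrable (fun ω =>
            (2 : ℝ) * ((w (n + 1) ω ^ α * x n ω) * (x (n + 1) ω - x n ω))) μ := by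
          simpa using hgd.const_mul 2
        rw [heq, integral_add iAB i2C, integral_add (hint (n + 1) n) hdd, integral_const_mul]
      have hsum : ∑ j ∈ Finset.Icc 1 (n + 1), ∫ ω, w j ω ^ α * (x j ω - x (j - 1) ω) ^ 2 ∂μ
          = (∑ j ∈ Finset.Icc 1 n, ∫ ω, w j ω ^ α * (x j ω - x (j - 1) ω) ^ 2 ∂μ)
            + ∫ ω, w (n + 1) ω ^ α * (x (n + 1) ω - x n ω) ^ 2 ∂μ := by
        rw [Finset.sum_Icc_succ_top (by omega : 1 ≤ n + 1)]
        simp [Nat.add_sub_cancel]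
      calc (∫ ω, w (n + 1 + 1) ω ^ α * (x (n + 1) ω) ^ 2 ∂μ)
          ≤ ∫ ω, w (n + 1) ω ^ α * (x (n + 1) ω) ^ 2 ∂μ := hstep1
        _ = (∫ ω, w (n + 1) ω ^ α * (x n ω) ^ 2 ∂μ)
            + (∫ ω, w (n + 1) ω ^ α * (x (n + 1) ω - x n ω) ^ 2 ∂μ)
            + 2 * ∫ ω, (w (n + 1) ω ^ α * x n ω) * (x (n + 1) ω - x n ω) ∂μ := hsplit
        _ = (∫ ω, w (n + 1) ω ^ α * (x n ω) ^ 2 ∂μ)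
            + (∫ ω, w (n + 1) ω ^ α * (x (n + 1) ω - x n ω) ^ 2 ∂μ) := by
              rw [cross n]; ring
        _ ≤ ∑ j ∈ Finset.Icc 1 (n + 1), ∫ ω, w j ω ^ α * (x j ω - x (j - 1) ω) ^ 2 ∂μ := by
              rw [hsum]; exact add_le_add_left ih _
  exact main k
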